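/- Let p be a prime, n a positive integer, and R an F_p-algebra. Consider the Laurent polynomial algebra S = R[Y_1^{±1}, Y_U^{±1}, ..., Y_{U^{p^n-1}}^{±1}], made a right comodule algebra over H = R[U]/(U^{p^n}-1) (with U group-like) by ρ(Y_{U^s}) = Y_{U^s} ⊗ U^s. Then the subalgebra of coinvariants S^{coH} equals R[Y_1^{±1}, (Y_U^2/Y_{U^2})^{±1}, ..., (Y_U^{p^n-1}/Y_{U^{p^n-1}})^{±1}, (Y_U^{p^n})^{±1}]. -/

import Mathlib

open AddMonoidAlgebra

/-- Coinvariants of the Laurent polynomial algebra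
`S = R[Y_1^{±1}, Y_U^{±1}, …, Y_{U^{p^n-1}}^{±1}]` (realized as the group algebra of
`ℤ^{p^n}`, the variable `Y_{U^s}` corresponding to the `s`-th standard exponent vector)
under the `H = R[U]/(U^{p^n}-1)`-coaction `ρ(Y_{U^s}) = Y_{U^s} ⊗ U^s`: since `U^j` run
through a basis of `H`, an element is coinvariant iff every monomial `∏ Y_{U^s}^{m_s}` in
its support has degree `∑ s·m_s ≡ 0 (mod p^n)`.  The claim is that the coinvariant
subalgebra equals
`R[Y_1^{±1}, (Y_U^2/Y_{U^2})^{±1}, …, (Y_U^{p^n-1}/Y_{U^{p^n-1}})^{±1}, (Y_U^{p^n})^{±1}]`. -/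
theorem stmt8 (p : ℕ) [Fact p.Prime] (n : ℕ) (hn : 0 < n)
    (R : Type*) [CommRing R] [CharP R p] :
    let N := p ^ n
    let S := AddMonoidAlgebra R (Fin N → ℤ)
    let e : Fin N → (Fin N → ℤ) := fun i => Pi.single i 1
    -- exponent vectors of the claimed generators and their inverses
    let V : Set (Fin N → ℤ) :=
      {e 0, -e 0, (N : ℤ) • e 1, -((N : ℤ) • e 1)} ∪
        {v | ∃ s : Fin N, 2 ≤ (s : ℕ) ∧
          (v = (s : ℕ) • e 1 - e s ∨ v = e s - (s : ℕ) • e 1)}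
    let gens : Set S := {x | ∃ v ∈ V, x = AddMonoidAlgebra.single v (1 : R)}
    ∀ x : S, x ∈ Algebra.adjoin R gens ↔
      ∀ m ∈ x.coeff.support, (∑ i : Fin N, ((i : ℕ) : ZMod (p ^ n)) * ((m i : ℤ) : ZMod (p ^ n)))
        = 0 := by
  intro N S e V gens x
  classical
  have hN1 : 1 < N := by
    have hp := (Fact.out : p.Prime).one_lt
    calc 1 < p := hp
      _ ≤ p ^ n := Nat.le_self_pow hn.ne' p
  have hone : ((1 : Fin N) : ℕ) = 1 := by
    simp [Fin.val_one', Nat.mod_eq_of_lt hN1]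
  -- the degree map
  set d : (Fin N → ℤ) → ZMod (p ^ n) :=
    fun m => ∑ i : Fin N, ((i : ℕ) : ZMod (p ^ n)) * ((m i : ℤ) : ZMod (p ^ n)) with hd
  have d_add : ∀ a b, d (a + b) = d a + d b := by
    intro a b
    simp [hd, mul_add, Finset.sum_add_distrib]
  have d_neg : ∀ a, d (-a) = - d a := by
    intro a
    simp [hd]
  have d_pi : ∀ (i : Fin N) (c : ℤ), d (Pi.single i c) = ((i : ℕ) : ZMod (p ^ n)) * (c : ZMod (p ^ n)) := by
    intro i c
    simp [hd, Pi.single_apply, apply_ite (Int.cast : ℤ → ZMod (p ^ n)), mul_ite,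
      Finset.sum_ite_eq]
  have hsm : ∀ (c : ℤ) (i : Fin N), c • e i = Pi.single i c := by
    intro c i
    funext j
    simp [e, Pi.single_apply, mul_ite]
  have hsmn : ∀ (c : ℕ) (i : Fin N), c • e i = Pi.single i (c : ℤ) := by
    intro c i
    funext j
    simp [e, Pi.single_apply, mul_ite]
  have he : ∀ i : Fin N, e i = Pi.single i (1 : ℤ) := fun i => rfl
  -- degrees of all generators vanish
  have hV : ∀ v ∈ V, d v = 0 := by
    intro v hv
    rcases hv with hv | ⟨s, hs2, rfl | rfl⟩
    · simp only [Set.mem_insert_iff, Set.mem_singleton_iff] at hv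
      rcases hv with rfl | rfl | rfl | rfl
      · rw [he, d_pi]; simp
      · rw [d_neg, he, d_pi]; simp
      · rw [hsm, d_pi]
        have : ((N : ℤ) : ZMod (p ^ n)) = 0 := by
          have : ((N : ℕ) : ZMod (p ^ n)) = 0 := by
            simp [N, ZMod.natCast_self]
          push_cast
          simpa using this
        simp [this]
      · rw [d_neg, hsm, d_pi]
        have : ((N : ℤ) : ZMod (p ^ n)) = 0 := by
          have : ((N : ℕ) : ZMod (p ^ n)) = 0 := by
            simp [N, ZMod.natCast_self]
          push_cast
          simpa using this
        simp [this]
    · have : d ((s : ℕ) • e 1 - e s) = d ((s : ℕ) • e 1) + d (-(e s)) := by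
        rw [← d_add]; ring_nf
      rw [this, d_neg, hsmn, he, d_pi, d_pi, hone]
      push_cast
      ring
    · have : d (e s - (s : ℕ) • e 1) = d (e s) + d (-((s : ℕ) • e 1)) := by
        rw [← d_add]; ring_nf
      rw [this, d_neg, hsmn, he, d_pi, d_pi, hone]
      push_cast
      ring
  constructor
  · -- forward: adjoin elements have coinvariant support
    intro hx
    refine Algebra.adjoin_induction
      (p := fun y _ => ∀ m ∈ y.coeff.support, d m = 0) ?_ ?_ ?_ ?_ hx
    · rintro _ ⟨v, hv, rfl⟩ m hm
      have := Finsupp.support_single_subset hm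
      rw [Finset.mem_singleton] at this
      rw [this]
      exact hV v hv
    · intro r m hm
      have h1 : (algebraMap R S r) = AddMonoidAlgebra.single 0 r := rfl
      rw [h1] at hm
      have := Finsupp.support_single_subset hm
      rw [Finset.mem_singleton] at this
      subst this
      simp [hd]
    · intro a b _ _ ha hb m hm
      rcases Finset.mem_union.mp (Finsupp.support_add hm) with h | h
      · exact ha m h
      · exact hb m h
    · intro a b _ _ ha hb m hm
      have := AddMonoidAlgebra.support_coeff_mul_subset a b hm
      rw [Finset.mem_add] at this
      obtain ⟨u, hu, v, hv, rfl⟩ := this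
      rw [d_add, ha u hu, hb v hv, add_zero]
  · -- reverse
    intro hsupp
    -- the subgroup of exponents whose monomials lie in the adjoin
    set A := Algebra.adjoin R gens with hA
    have mul_sing : ∀ a b : Fin N → ℤ,
        AddMonoidAlgebra.single a (1 : R) * AddMonoidAlgebra.single b 1
          = AddMonoidAlgebra.single (a + b) 1 := by
      intro a b
      rw [AddMonoidAlgebra.single_mul_single, one_mul]
    set K : AddSubgroup (Fin N → ℤ) :=
      { carrier := {v | AddMonoidAlgebra.single v (1 : R) ∈ A ∧
          AddMonoidAlgebra.single (-v) (1 : R) ∈ A}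
        zero_mem' := by
          have h1 : AddMonoidAlgebra.single (0 : Fin N → ℤ) (1 : R) ∈ A := by
            rw [← AddMonoidAlgebra.one_def]
            exact A.one_mem
          exact ⟨h1, by rw [neg_zero]; exact h1⟩
        add_mem' := by
          rintro a b ⟨ha1, ha2⟩ ⟨hb1, hb2⟩
          refine ⟨?_, ?_⟩
          · rw [← mul_sing]; exact A.mul_mem ha1 hb1
          · rw [neg_add, ← mul_sing]; exact A.mul_mem ha2 hb2
        neg_mem' := by
          rintro a ⟨ha1, ha2⟩
          exact ⟨ha2, by rw [neg_neg]; exact ha1⟩ } with hK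
    have hKmem : ∀ v : Fin N → ℤ, v ∈ K ↔
        (AddMonoidAlgebra.single v (1 : R) ∈ A ∧
          AddMonoidAlgebra.single (-v) (1 : R) ∈ A) := fun v => Iff.rfl
    have hgen : ∀ v ∈ V, v ∈ K := by
      intro v hv
      have hv' : -v ∈ V := by
        rcases hv with hv | ⟨s, hs2, rfl | rfl⟩
        · simp only [Set.mem_insert_iff, Set.mem_singleton_iff] at hv
          rcases hv with rfl | rfl | rfl | rfl
          · exact Or.inl (by simp [Set.mem_insert_iff, Set.mem_singleton_iff])
          · exact Or.inl (by simp [Set.mem_insert_iff, Set.mem_singleton_iff])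
          · exact Or.inl (by simp [Set.mem_insert_iff, Set.mem_singleton_iff])
          · exact Or.inl (by simp [Set.mem_insert_iff, Set.mem_singleton_iff])
        · exact Or.inr ⟨s, hs2, Or.inr (by rw [neg_sub])⟩
        · exact Or.inr ⟨s, hs2, Or.inl (by rw [neg_sub])⟩
      exact (hKmem v).mpr ⟨Algebra.subset_adjoin ⟨v, hv, rfl⟩,
        Algebra.subset_adjoin ⟨-v, hv', rfl⟩⟩
    have hw : ∀ s : Fin N, (e s - (s : ℕ) • e 1) ∈ K := by
      intro s
      rcases lt_or_ge (s : ℕ) 2 with hs | hs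
      · interval_cases h : (s : ℕ)
        · have hs0 : s = 0 := Fin.ext (by simp [h])
          subst hs0
          have : e 0 - (0 : ℕ) • e 1 = e 0 := by simp
          rw [this]
          exact hgen (e 0) (Or.inl (by simp))
        · have hs1 : s = 1 := Fin.ext (by simp [h, Fin.val_one, Nat.mod_eq_of_lt hN1])
          subst hs1
          have : e 1 - (1 : ℕ) • e 1 = 0 := by simp
          rw [this]
          exact K.zero_mem
      · exact hgen _ (Or.inr ⟨s, hs, Or.inr rfl⟩)
    have hNe1 : ((N : ℤ) • e 1) ∈ K := hgen _ (Or.inl (by simp))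
    rw [← AddMonoidAlgebra.sum_coeff_single x, Finsupp.sum]
    refine Subalgebra.sum_mem A ?_
    intro m hm
    -- the degree of m vanishes, so decompose m over the generators
    have hdm : d m = 0 := hsupp m hm
    have hcast : ((∑ i : Fin N, (i : ℤ) * m i : ℤ) : ZMod (p ^ n)) = 0 := by
      push_cast
      exact hdm
    obtain ⟨k, hk0⟩ := (ZMod.intCast_zmod_eq_zero_iff_dvd _ _).mp hcast
    have hk : (∑ i : Fin N, (i : ℤ) * m i) = (N : ℤ) * k := hk0
    have key : m = (∑ s : Fin N, m s • (e s - (s : ℕ) • e 1)) + k • ((N : ℤ) • e 1) := by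
      funext j
      have expand : ∀ s : Fin N, (m s • (e s - (s : ℕ) • e 1)) j
          = m s * (if j = s then 1 else 0) - ((s : ℤ) * m s) * (if j = 1 then 1 else 0) := by
        intro s
        simp only [Pi.smul_apply, Pi.sub_apply, smul_eq_mul, e, nsmul_eq_mul,
          Pi.mul_apply, Pi.natCast_apply, Pi.single_apply]
        split_ifs <;> ring
      have h1 : (∑ s : Fin N, m s * (if j = s then (1:ℤ) else 0)) = m j := by
        simp [mul_ite, Finset.sum_ite_eq]
      rw [Pi.add_apply, Finset.sum_apply]
      simp_rw [expand]
      rw [Finset.sum_sub_distrib, ← Finset.sum_mul, h1, hk]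
      simp only [Pi.smul_apply, smul_eq_mul, e, Pi.single_apply]
      by_cases hj : j = 1 <;> simp [hj] <;> ring
    have hmK : ((∑ s : Fin N, m s • (e s - (s : ℕ) • e 1)) + k • ((N : ℤ) • e 1)) ∈ K :=
      K.add_mem (AddSubgroup.sum_mem K fun s _ => K.zsmul_mem (hw s) (m s))
        (K.zsmul_mem hNe1 k)
    have hsmem : AddMonoidAlgebra.single m (1 : R) ∈ A := by
      rw [key]
      exact hmK.1
    have hrw : AddMonoidAlgebra.single m (x.coeff m)
        = x.coeff m • AddMonoidAlgebra.single m (1 : R) := by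
      rw [AddMonoidAlgebra.smul_single', mul_one]
    rw [hrw]
    exact A.smul_mem hsmem (x.coeff m)
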